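/- Let A ⊆ B be the extension of complete local rings A = O[[q^{1/p^{n-1}}]] and B = O[[q^{1/p^n}]] over a complete DVR O of mixed characteristic (0,p) containing a primitive p^n-th root of unity, with q^{1/p^{n-1}} = (q^{1/p^n})^p. Then Hom_A(B, A) is a free B-module of rank 1 generated by (1/p)·q^{1/p^n − 1/p^{n-1}}·Tr_{B/A}, where Tr_{B/A} is the trace form. -/

import Mathlib

/-!
STATEMENT 12: O a complete DVR of mixed characteristic (0,p) containing a primitive
p^n-th root of unity; A = O[[q^{1/p^{n-1}}]] ⊆ B = O[[q^{1/p^n}]] with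
q^{1/p^{n-1}} = (q^{1/p^n})^p.  Then Hom_A(B, A) is a free B-module of rank 1 generated
by (1/p)·q^{1/p^n − 1/p^{n-1}}·Tr_{B/A}.  We realize A as the image of the continuous
O-algebra endomorphism ι of B = O[[X]] (X = q^{1/p^n}) sending X ↦ X^p.
-/

open PowerSeries

section
variable {O : Type} [CommRing O]

noncomputable def Ei (p i : ℕ) (f : PowerSeries O) : PowerSeries O :=
  PowerSeries.mk fun m => if p ∣ m then (coeff (m + i)) f else 0

lemma coeff_Ei (p i m : ℕ) (f : PowerSeries O) :
    coeff m (Ei p i f) = if p ∣ m then coeff (m + i) f else 0 := coeff_mk _ _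

lemma Ei_add (p i : ℕ) (f g : PowerSeries O) : Ei p i (f + g) = Ei p i f + Ei p i g := by
  ext m; simp only [coeff_Ei, map_add]; split <;> simp

noncomputable def EiHom (p i : ℕ) : PowerSeries O →+ PowerSeries O where
  toFun := Ei p i
  map_zero' := by ext m; simp [coeff_Ei]
  map_add' := Ei_add p i

@[simp] lemma EiHom_apply (p i : ℕ) (f : PowerSeries O) : EiHom p i f = Ei p i f := rfl

lemma Ei_supported (p i : ℕ) (f : PowerSeries O) (m : ℕ) (hm : ¬ p ∣ m) :
    coeff m (Ei p i f) = 0 := by rw [coeff_Ei, if_neg hm]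

lemma Ei_X_pow (p i j : ℕ) (hi : i < p) (hj : j < p) :
    Ei p j (X ^ i : PowerSeries O) = if i = j then 1 else 0 := by
  ext m
  rw [coeff_Ei, coeff_X_pow]
  by_cases hij : i = j
  · subst hij
    simp only [if_pos rfl, coeff_one]
    by_cases hm : m = 0
    · subst hm; simp
    · have h1 : ¬ (m + i = i) := by omega
      simp [h1, hm]
  · simp only [if_neg hij, map_zero]
    by_cases hd : p ∣ m
    · rw [if_pos hd]
      have : ¬ (m + j = i) := by
        rcases Nat.eq_zero_or_pos m with h | h
        · omega
        · have : p ≤ m := Nat.le_of_dvd h hd; omega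
      rw [if_neg this]
    · rw [if_neg hd]

lemma Ei_mul_X_pow (p i : ℕ) (f : PowerSeries O) :
    Ei p i (f * X ^ i) = Ei p 0 f := by
  ext m
  simp only [coeff_Ei, coeff_mul_X_pow, Nat.add_zero]

lemma coeff_Ei_mul_X_pow' (p r : ℕ) (hr : r < p) (c : PowerSeries O) (m : ℕ) (hm : p ∣ m) :
    coeff m (Ei p (p - 1) (c * X ^ (p - 1 - r))) = coeff (m + r) c := by
  rw [coeff_Ei, if_pos hm]
  have h : m + (p - 1) = (m + r) + (p - 1 - r) := by omega
  rw [h, coeff_mul_X_pow]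

lemma Ei_mul (p i : ℕ) (hi : i < p) (a f : PowerSeries O)
    (ha : ∀ m, ¬ p ∣ m → coeff m a = 0) :
    Ei p i (a * f) = a * Ei p i f := by
  ext m
  by_cases hd : p ∣ m
  · rw [coeff_Ei, if_pos hd, coeff_mul, Finset.Nat.sum_antidiagonal_eq_sum_range_succ_mk,
      coeff_mul, Finset.Nat.sum_antidiagonal_eq_sum_range_succ_mk]
    have hsub : Finset.range (m + 1) ⊆ Finset.range (m + i + 1) := by
      apply Finset.range_subset_range.mpr; omega
    rw [← Finset.sum_subset hsub]
    · apply Finset.sum_congr rfl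
      intro k hk
      rw [Finset.mem_range] at hk
      have hk' : k ≤ m := by omega
      by_cases hpk : p ∣ k
      · have h1 : p ∣ m - k := Nat.dvd_sub hd hpk
        rw [coeff_Ei, if_pos h1, Nat.sub_add_comm hk']
      · rw [ha k hpk, zero_mul, zero_mul]
    · intro k hk hk'
      rw [Finset.mem_range] at hk
      rw [Finset.mem_range, not_lt] at hk'
      have hpk : ¬ p ∣ k := by
        intro hpk
        have h1 : p ∣ k - m := Nat.dvd_sub hpk hd
        have h2 : 0 < k - m := by omega
        have := Nat.le_of_dvd h2 h1
        omega
      rw [ha k hpk, zero_mul]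
  · rw [coeff_Ei, if_neg hd, coeff_mul, Finset.Nat.sum_antidiagonal_eq_sum_range_succ_mk]
    symm
    apply Finset.sum_eq_zero
    intro k hk
    rw [Finset.mem_range] at hk
    by_cases hpk : p ∣ k
    · have h1 : ¬ p ∣ m - k := by
        intro h
        exact hd (by have := Nat.dvd_add hpk h; rwa [Nat.add_sub_cancel' (by omega : k ≤ m)] at this)
      rw [coeff_Ei, if_neg h1, mul_zero]
    · rw [ha k hpk, zero_mul]

lemma Ei_decomp (p : ℕ) (hp : 0 < p) (f : PowerSeries O) :
    f = ∑ i ∈ Finset.range p, Ei p i f * X ^ i := by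
  ext m
  rw [map_sum, Finset.sum_eq_single (m % p)]
  · have h1 : m % p ≤ m := Nat.mod_le m p
    have h2 : p ∣ m - m % p := by
      have := Nat.div_add_mod m p
      exact ⟨m / p, by omega⟩
    rw [coeff_mul_X_pow', if_pos h1, coeff_Ei, if_pos h2, Nat.sub_add_cancel h1]
  · intro i hi hne
    rw [Finset.mem_range] at hi
    rw [coeff_mul_X_pow']
    split
    · rw [coeff_Ei, if_neg]
      intro hdvd
      have h3 : i ≡ m [MOD p] := (Nat.modEq_iff_dvd' (by omega)).mpr hdvd
      have h4 : i % p = m % p := h3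
      rw [Nat.mod_eq_of_lt hi] at h4
      exact hne h4
    · rfl
  · intro h
    exact absurd (Finset.mem_range.mpr (Nat.mod_lt m hp)) h

lemma Ei_delta (p i j : ℕ) (hp : 0 < p) (hi : i < p) (hj : j < p) :
    Ei p (p - 1) ((X : PowerSeries O) ^ (p - 1 - i) * X ^ j) = if i = j then 1 else 0 := by
  rw [← pow_add]
  ext m
  rw [coeff_Ei, coeff_X_pow]
  by_cases hij : i = j
  · subst hij
    rw [if_pos rfl, coeff_one]
    by_cases hm : m = 0
    · subst hm
      have h : 0 + (p - 1) = p - 1 - i + i := by omega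
      simp [h]
    · have h1 : ¬ (m + (p - 1) = p - 1 - i + i) := by omega
      simp [h1, hm]
  · rw [if_neg hij, map_zero]
    by_cases hd : p ∣ m
    · rw [if_pos hd, if_neg]
      rcases Nat.eq_zero_or_pos m with h | h
      · omega
      · have : p ≤ m := Nat.le_of_dvd h hd; omega
    · rw [if_neg hd]

lemma iota_poly (p : ℕ) (ι : PowerSeries O →+* PowerSeries O)
    (hιX : ι PowerSeries.X = PowerSeries.X ^ p)
    (hιC : ∀ a : O, ι (PowerSeries.C a) = PowerSeries.C a) (F : Polynomial O) :
    ι ↑F = Polynomial.eval₂ (C (R := O)) (X ^ p) F := by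
  have h : ι.comp (Polynomial.coeToPowerSeries.ringHom) =
      Polynomial.eval₂RingHom (C (R := O)) (X ^ p) := by
    apply Polynomial.ringHom_ext
    · intro a; simp [hιC]
    · simp [hιX]
  exact DFunLike.congr_fun h F

lemma coeff_iota_poly (p : ℕ) (hp : 0 < p) (ι : PowerSeries O →+* PowerSeries O)
    (hιX : ι PowerSeries.X = PowerSeries.X ^ p)
    (hιC : ∀ a : O, ι (PowerSeries.C a) = PowerSeries.C a) (F : Polynomial O) (m : ℕ) :
    coeff m (ι ↑F) = if p ∣ m then F.coeff (m / p) else 0 := by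
  rw [iota_poly p ι hιX hιC, Polynomial.eval₂_eq_sum, Polynomial.sum, map_sum]
  have hterm : ∀ e, coeff m (C (F.coeff e) * (X ^ p) ^ e)
      = F.coeff e * (if m = p * e then 1 else 0) := by
    intro e
    rw [← pow_mul, coeff_C_mul, coeff_X_pow]
  simp only [hterm]
  by_cases hd : p ∣ m
  · obtain ⟨q, rfl⟩ := hd
    rw [Finset.sum_eq_single q]
    · simp [Nat.mul_div_cancel_left _ hp]
    · intro e _ he
      have : ¬ (p * q = p * e) := fun h => he (Nat.eq_of_mul_eq_mul_left hp h).symm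
      simp [this]
    · intro hq
      simp [Polynomial.notMem_support_iff.mp hq]
  · rw [if_neg hd, Finset.sum_eq_zero]
    intro e _
    have : ¬ (m = p * e) := fun h => hd ⟨e, h⟩
    simp [this]

lemma coeff_iota (p : ℕ) (hp : 0 < p) (ι : PowerSeries O →+* PowerSeries O)
    (hιX : ι PowerSeries.X = PowerSeries.X ^ p)
    (hιC : ∀ a : O, ι (PowerSeries.C a) = PowerSeries.C a)
    (hcont : ∀ m : ℕ, ∃ N : ℕ, ∀ g : PowerSeries O,
      PowerSeries.X ^ N ∣ g → PowerSeries.X ^ m ∣ ι g)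
    (g : PowerSeries O) (m : ℕ) :
    coeff m (ι g) = if p ∣ m then coeff (m / p) g else 0 := by
  obtain ⟨N₀, hN₀⟩ := hcont (m + 1)
  set N := max N₀ (m + 1) with hN
  have hdvd : X ^ N₀ ∣ (g - ((trunc N g : Polynomial O) : PowerSeries O)) := by
    rw [X_pow_dvd_iff]
    intro k hk
    have hkN : k < N := lt_of_lt_of_le hk (le_max_left _ _)
    rw [map_sub, Polynomial.coeff_coe, coeff_trunc, if_pos hkN, sub_self]
  have h0 : coeff m (ι (g - ((trunc N g : Polynomial O) : PowerSeries O))) = 0 := by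
    have := hN₀ _ hdvd
    rw [X_pow_dvd_iff] at this
    exact this m (Nat.lt_succ_self m)
  have hsplit : ι g = ι ((trunc N g : Polynomial O) : PowerSeries O)
      + ι (g - ((trunc N g : Polynomial O) : PowerSeries O)) := by
    rw [← map_add]; ring_nf
  rw [hsplit, map_add, h0, add_zero, coeff_iota_poly p hp ι hιX hιC]
  by_cases hd : p ∣ m
  · rw [if_pos hd, if_pos hd, coeff_trunc,
      if_pos (lt_of_le_of_lt (Nat.div_le_self m p) (lt_of_lt_of_le (Nat.lt_succ_self m) (le_max_right _ _)))]
  · simp [hd]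

end

set_option maxHeartbeats 2000000 in
set_option synthInstance.maxHeartbeats 1000000 in
theorem inverse_different_cusp
    (p : ℕ) [Fact p.Prime] (n : ℕ) (hn : 1 ≤ n)
    (O : Type) [CommRing O] [IsDomain O] [IsLocalRing O] [CharZero O]
    [IsAdicComplete (IsLocalRing.maximalIdeal O) O]
    [IsDiscreteValuationRing O]
    -- residue characteristic p
    (hres : (p : O) ∈ IsLocalRing.maximalIdeal O)
    -- O contains a primitive p^n-th root of unity
    (ζ : O) (hζ : IsPrimitiveRoot ζ (p ^ n))
    (ι : PowerSeries O →+* PowerSeries O)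
    (hιX : ι PowerSeries.X = PowerSeries.X ^ p)
    (hιC : ∀ a : O, ι (PowerSeries.C a) = PowerSeries.C a)
    (hcont : ∀ m : ℕ, ∃ N : ℕ, ∀ g : PowerSeries O,
      PowerSeries.X ^ N ∣ g → PowerSeries.X ^ m ∣ ι g) :
    -- A = O[[q^{1/p^{n-1}}]] inside B = O[[q^{1/p^n}]]
    ∀ A : Subring (PowerSeries O), A = ι.range →
      -- Hom_A(B, A) is free of rank one over B, generated by
      -- t = (1/p)·q^{1/p^n − 1/p^{n-1}}·Tr_{B/A}, i.e. p·(X^{p-1} • t) = Tr_{B/A}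
      ∃ t : PowerSeries O →ₗ[A] A,
        (∀ x : PowerSeries O,
          (p : A) * t (PowerSeries.X ^ (p - 1) * x) =
            Algebra.trace A (PowerSeries O) x) ∧
        (∀ φ : PowerSeries O →ₗ[A] A,
          ∃! b : PowerSeries O, ∀ x, φ x = t (b * x)) := by
  intro A hA
  subst hA
  have hp : 0 < p := (Fact.out : p.Prime).pos
  set A := ι.range with hA
  -- membership criteria
  have hmem : ∀ f : PowerSeries O, (∀ m, ¬ p ∣ m → coeff m f = 0) → f ∈ A := by
    intro f hf
    refine ⟨PowerSeries.mk (fun k => coeff (p * k) f), ?_⟩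
    ext m
    rw [coeff_iota p hp ι hιX hιC hcont]
    by_cases hd : p ∣ m
    · rw [if_pos hd, coeff_mk, Nat.mul_div_cancel' hd]
    · rw [if_neg hd, (hf m hd)]
  have hsupp : ∀ a : A, ∀ m, ¬ p ∣ m → coeff m (a : PowerSeries O) = 0 := by
    rintro ⟨a, g, rfl⟩ m hm
    rw [coeff_iota p hp ι hιX hιC hcont, if_neg hm]
  have hmemEi : ∀ (f : PowerSeries O) (i : ℕ), Ei p i f ∈ A :=
    fun f i => hmem _ (fun m hm => Ei_supported p i f m hm)
  have hsmul : ∀ (a : A) (x : PowerSeries O), a • x = (a : PowerSeries O) * x :=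
    fun _ _ => rfl
  -- the trace-dual generator
  set t : PowerSeries O →ₗ[A] A :=
    { toFun := fun f => ⟨Ei p (p - 1) f, hmemEi f (p - 1)⟩
      map_add' := fun f g => Subtype.ext (Ei_add p (p - 1) f g)
      map_smul' := fun a f => by
        refine Subtype.ext ?_
        simp only [RingHom.id_apply]
        rw [hsmul]
        exact (Ei_mul p (p - 1) (by omega) _ f (hsupp a)) } with ht
  have ht_apply : ∀ f, (t f : PowerSeries O) = Ei p (p - 1) f := fun _ => rfl
  -- basis X^0, ..., X^(p-1)
  have hdecompA : ∀ f : PowerSeries O,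
      f = ∑ i : Fin p, (⟨Ei p (i : ℕ) f, hmemEi f i⟩ : A) • (X : PowerSeries O) ^ (i : ℕ) := by
    intro f
    conv_lhs => rw [Ei_decomp p hp f]
    rw [Finset.sum_range fun i => Ei p i f * X ^ i]
    rfl
  have hLI : LinearIndependent A (fun i : Fin p => (X : PowerSeries O) ^ (i : ℕ)) := by
    rw [linearIndependent_iff']
    intro s g hg i hi
    have h0 : Ei p (i : ℕ) (∑ j ∈ s, g j • (X : PowerSeries O) ^ (j : ℕ)) = 0 := by
      rw [hg]; ext m; simp [coeff_Ei]
    rw [← EiHom_apply, map_sum] at h0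
    simp only [EiHom_apply] at h0
    have hterm : ∀ j ∈ s, Ei p (i : ℕ) (g j • (X : PowerSeries O) ^ (j : ℕ))
        = if (j : Fin p) = i then (g j : PowerSeries O) else 0 := by
      intro j _
      rw [hsmul, Ei_mul p (i : ℕ) i.isLt _ _ (hsupp (g j)), Ei_X_pow p _ _ j.isLt i.isLt]
      by_cases h : j = i
      · subst h; simp
      · have h' : ¬((j : ℕ) = (i : ℕ)) := fun hh => h (Fin.ext hh)
        simp [h, h']
    rw [Finset.sum_congr rfl hterm, Finset.sum_ite_eq' s i] at h0
    rw [if_pos hi] at h0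
    exact Subtype.ext h0
  have hSP : ⊤ ≤ Submodule.span A (Set.range (fun i : Fin p => (X : PowerSeries O) ^ (i : ℕ))) := by
    intro f _
    rw [hdecompA f]
    exact Submodule.sum_mem _ fun i _ =>
      Submodule.smul_mem _ _ (Submodule.subset_span ⟨i, rfl⟩)
  set b : Module.Basis (Fin p) A (PowerSeries O) := Module.Basis.mk hLI hSP with hb
  have hbapp : ∀ i : Fin p, b i = (X : PowerSeries O) ^ (i : ℕ) := fun i => Module.Basis.mk_apply hLI hSP i
  have hrepr : ∀ (f : PowerSeries O) (j : Fin p),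
      b.repr f j = ⟨Ei p (j : ℕ) f, hmemEi f j⟩ := by
    intro f j
    conv_lhs => rw [hdecompA f]
    rw [map_sum]
    have hterm : ∀ i : Fin p,
        b.repr ((⟨Ei p (i : ℕ) f, hmemEi f i⟩ : A) • (X : PowerSeries O) ^ (i : ℕ))
          = (⟨Ei p (i : ℕ) f, hmemEi f i⟩ : A) • (Finsupp.single i 1 : Fin p →₀ A) := by
      intro i
      rw [map_smul, ← hbapp i, b.repr_self]
    rw [Finset.sum_congr rfl (fun i _ => hterm i), Finset.sum_apply']
    simp [Finsupp.single_apply, Finset.sum_ite_eq']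
  classical
  have tδ : ∀ i j : Fin p, t ((X : PowerSeries O) ^ (p - 1 - (i : ℕ)) * X ^ (j : ℕ))
      = if i = j then 1 else 0 := by
    intro i j
    refine Subtype.ext ?_
    rw [ht_apply, Ei_delta p (i : ℕ) (j : ℕ) hp i.isLt j.isLt, apply_ite (Subtype.val)]
    by_cases h : i = j
    · subst h; simp
    · have h' : ¬((i : ℕ) = (j : ℕ)) := fun hh => h (Fin.ext hh)
      simp [h, h']
  refine ⟨t, ?_, ?_⟩
  · -- trace identity
    intro x
    rw [Algebra.trace_eq_matrix_trace b x, Matrix.trace]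
    have hdiag : ∀ i : Fin p,
        ((Algebra.leftMulMatrix b) x).diag i = (⟨Ei p 0 x, hmemEi x 0⟩ : A) := by
      intro i
      rw [Matrix.diag_apply, Algebra.leftMulMatrix_eq_repr_mul, hbapp, hrepr]
      exact Subtype.ext (Ei_mul_X_pow p (i : ℕ) x)
    have hLHS : t (X ^ (p - 1) * x) = (⟨Ei p 0 x, hmemEi x 0⟩ : A) := by
      refine Subtype.ext ?_
      rw [ht_apply, mul_comm, Ei_mul_X_pow]
    rw [hLHS, Finset.sum_congr rfl (fun i _ => hdiag i), Finset.sum_const,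
      Finset.card_univ, Fintype.card_fin, nsmul_eq_mul]
  · -- generator property
    intro φ
    set b₀ : PowerSeries O :=
      ∑ i : Fin p, ((φ (X ^ (i : ℕ)) : PowerSeries O) * X ^ (p - 1 - (i : ℕ))) with hb₀
    have hmulmap : ∀ (c : PowerSeries O),
        ∃ ψ : PowerSeries O →ₗ[A] A, ∀ x, ψ x = t (c * x) := by
      intro c
      refine ⟨{ toFun := fun x => t (c * x), map_add' := ?_, map_smul' := ?_ }, fun _ => rfl⟩
      · intro x y
        show t (c * (x + y)) = t (c * x) + t (c * y)
        rw [mul_add, map_add]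
      · intro a x
        show t (c * (a • x)) = a • t (c * x)
        rw [hsmul, show c * ((a : PowerSeries O) * x) = (a : PowerSeries O) * (c * x) by ring,
          ← hsmul, map_smul]
    obtain ⟨ψ, hψ⟩ := hmulmap b₀
    have hkey : ∀ i : Fin p, φ (X ^ (i : ℕ)) = t (b₀ * X ^ (i : ℕ)) := by
      intro i
      rw [hb₀, Finset.sum_mul, map_sum]
      have hterm : ∀ j : Fin p,
          t ((φ (X ^ (j : ℕ)) : PowerSeries O) * X ^ (p - 1 - (j : ℕ)) * X ^ (i : ℕ))
            = if j = i then φ (X ^ (j : ℕ)) else 0 := by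
        intro j
        have : (φ (X ^ (j : ℕ)) : PowerSeries O) * X ^ (p - 1 - (j : ℕ)) * X ^ (i : ℕ)
            = φ (X ^ (j : ℕ)) • ((X : PowerSeries O) ^ (p - 1 - (j : ℕ)) * X ^ (i : ℕ)) := by
          rw [hsmul]; ring
        rw [this, map_smul, tδ j i, smul_eq_mul]
        split <;> simp
      rw [Finset.sum_congr rfl (fun j _ => hterm j), Finset.sum_ite_eq' Finset.univ i]
      rw [if_pos (Finset.mem_univ i)]
    have hφψ : φ = ψ := by
      apply Module.Basis.ext b
      intro i
      rw [hbapp, hψ, ← hkey i]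
    refine ⟨b₀, fun x => by rw [hφψ, hψ], ?_⟩
    intro y hy
    have hz : ∀ x, t ((y - b₀) * x) = 0 := by
      intro x
      have h1 : φ x = t (y * x) := hy x
      have h2 : φ x = t (b₀ * x) := by rw [hφψ, hψ]
      have h3 : t (y * x) - t (b₀ * x) = 0 := by rw [← h1, ← h2, sub_self]
      rw [← map_sub, ← sub_mul] at h3
      exact h3
    have hy0 : y - b₀ = 0 := by
      ext m
      have hr : m % p < p := Nat.mod_lt m hp
      have hd : p ∣ m - m % p := ⟨m / p, by have := Nat.div_add_mod m p; omega⟩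
      have hv : Ei p (p - 1) ((y - b₀) * X ^ (p - 1 - m % p)) = 0 := by
        rw [← ht_apply, hz (X ^ (p - 1 - m % p))]
        rfl
      have hc := congrArg (coeff (m - m % p)) hv
      rw [coeff_Ei_mul_X_pow' p (m % p) hr _ _ hd,
        Nat.sub_add_cancel (Nat.mod_le m p)] at hc
      simpa using hc
    exact sub_eq_zero.mp hy0
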